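/- For i = 1,2,3 let A_i and B_i be qubit observables with Bloch vectors a_i, b_i ∈ ℝ³, and assume each of the triples {a₁,a₂,a₃} and {b₁,b₂,b₃} is linearly independent. Define the 4×4 Hermitian matrices M_i = A_i ⊗ I + I ⊗ B_i (Kronecker products, I the 2×2 identity). If ρ is a separable bipartite density matrix, i.e. ρ = Σ_k p_k · ρ_{k,A} ⊗ ρ_{k,B} is a finite convex combination (p_k ≥ 0, Σ_k p_k = 1) of Kronecker products of qubit density matrices, then Σ_{i=1}^{3} (Δ_ρM_i)² ≥ (Tr(T_{a₁,a₂,a₃}) − λ_max(T_{a₁,a₂,a₃})) + (Tr(T_{b₁,b₂,b₃}) − λ_max(T_{b₁,b₂,b₃})). -/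

import Mathlib

open Matrix MeasureTheory Filter Set
open scoped RealInnerProductSpace Kronecker ComplexOrder

noncomputable section

/-- ℝ³ with the Euclidean norm and inner product. -/
abbrev E3 : Type := EuclideanSpace ℝ (Fin 3)

/-- The Pauli matrices. -/
def pauli1 : Matrix (Fin 2) (Fin 2) ℂ := !![0, 1; 1, 0]
def pauli2 : Matrix (Fin 2) (Fin 2) ℂ := !![0, -Complex.I; Complex.I, 0]
def pauli3 : Matrix (Fin 2) (Fin 2) ℂ := !![1, 0; 0, -1]

/-- The qubit observable `a₀·I + a·σ`. -/
def qObs (a0 : ℝ) (a : E3) : Matrix (Fin 2) (Fin 2) ℂ :=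
  (a0 : ℂ) • (1 : Matrix (Fin 2) (Fin 2) ℂ)
    + (a 0 : ℂ) • pauli1 + (a 1 : ℂ) • pauli2 + (a 2 : ℂ) • pauli3

/-- A density matrix: positive semidefinite with trace one. -/
def IsDensityMatrix {n : Type*} [Fintype n] (ρ : Matrix n n ℂ) : Prop :=
  ρ.PosSemidef ∧ ρ.trace = 1

/-- Mean value `⟨M⟩_ρ = Tr(Mρ)` of an observable `M` in the state `ρ`. -/
def mean {n : Type*} [Fintype n] (M ρ : Matrix n n ℂ) : ℝ :=
  (Matrix.trace (M * ρ)).re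

/-- Variance `(Δ_ρ M)² = Tr(M²ρ) − (Tr(Mρ))²`. -/
def variance {n : Type*} [Fintype n] (M ρ : Matrix n n ℂ) : ℝ :=
  (Matrix.trace (M * M * ρ)).re - (mean M ρ) ^ 2

/-- Uncertainty `Δ_ρ M` (standard deviation). -/
def uncertainty {n : Type*} [Fintype n] (M ρ : Matrix n n ℂ) : ℝ :=
  Real.sqrt (variance M ρ)

/-- Gram matrix of a tuple of vectors in ℝ³. -/
def gram {m : ℕ} (v : Fin m → E3) : Matrix (Fin m) (Fin m) ℝ :=
  Matrix.of fun i j => (inner ℝ (v i) (v j) : ℝ)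

lemma gram_isHermitian {m : ℕ} (v : Fin m → E3) : (gram v).IsHermitian := by
  ext i j
  simp [_root_.gram, Matrix.conjTranspose_apply, mul_comm, real_inner_comm]

/-- Smallest eigenvalue of the Gram matrix. -/
def lamMin {m : ℕ} (v : Fin m → E3) : ℝ := ⨅ i, (gram_isHermitian v).eigenvalues i

/-- Largest eigenvalue of the Gram matrix. -/
def lamMax {m : ℕ} (v : Fin m → E3) : ℝ := ⨆ i, (gram_isHermitian v).eigenvalues i

/-- The bipartite observable A ⊗ I + I ⊗ B. -/
def obs2 (A B : Matrix (Fin 2) (Fin 2) ℂ) :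
    Matrix (Fin 2 × Fin 2) (Fin 2 × Fin 2) ℂ :=
  A ⊗ₖ (1 : Matrix (Fin 2) (Fin 2) ℂ) + (1 : Matrix (Fin 2) (Fin 2) ℂ) ⊗ₖ B


/-! ### Auxiliary lemmas -/

lemma gram_posSemidef {m : ℕ} (v : Fin m → E3) : (gram v).PosSemidef := by
  have : gram v = (Matrix.of fun i j => v i j) * (Matrix.of fun i j => v i j)ᴴ := by
    ext i j
    simp [_root_.gram, Matrix.mul_apply, Matrix.conjTranspose_apply, PiLp.inner_apply, mul_comm]
  rw [this]
  exact Matrix.posSemidef_self_mul_conjTranspose _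

lemma lamMax_nonneg {m : ℕ} [NeZero m] (v : Fin m → E3) : 0 ≤ lamMax v := by
  refine le_trans ((gram_posSemidef v).eigenvalues_nonneg ⟨0, Nat.pos_of_ne_zero (NeZero.ne m)⟩)
    (le_ciSup (Set.Finite.bddAbove (Set.finite_range _)) _)

lemma smul_one_sub_posSemidef {m : ℕ} [NeZero m] (v : Fin m → E3) :
    (lamMax v • (1 : Matrix (Fin m) (Fin m) ℝ) - gram v).PosSemidef := by
  set hT := gram_isHermitian v
  set U : Matrix (Fin m) (Fin m) ℝ := (hT.eigenvectorUnitary : Matrix (Fin m) (Fin m) ℝ)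
  have hU1 : U * star U = 1 := Matrix.mem_unitaryGroup_iff.mp hT.eigenvectorUnitary.2
  have key : lamMax v • (1 : Matrix (Fin m) (Fin m) ℝ) - gram v
      = U * ((Matrix.diagonal fun i => lamMax v - hT.eigenvalues i)) * star U := by
    conv_lhs => rw [hT.spectral_theorem, Unitary.conjStarAlgAut_apply]
    have h1 : lamMax v • (1 : Matrix (Fin m) (Fin m) ℝ) = U * (lamMax v • 1) * star U := by
      rw [Matrix.mul_smul, Matrix.smul_mul, mul_one, hU1]
    rw [h1]
    rw [← Matrix.sub_mul, ← Matrix.mul_sub]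
    congr 1
    congr 1
    ext i j
    by_cases h : i = j <;>
      simp [Matrix.diagonal, Matrix.one_apply, h, Function.comp]
  rw [key]
  have hdiag : (Matrix.diagonal fun i => lamMax v - hT.eigenvalues i).PosSemidef := by
    rw [Matrix.posSemidef_diagonal_iff]
    intro i
    simp only [sub_nonneg]
    exact le_ciSup (Set.Finite.bddAbove (Set.finite_range _)) i
  have := hdiag.mul_mul_conjTranspose_same U
  simpa [Matrix.star_eq_conjTranspose] using this

lemma gram_quadform_le {m : ℕ} [NeZero m] (v : Fin m → E3) (c : Fin m → ℝ) :
    c ⬝ᵥ (gram v *ᵥ c) ≤ lamMax v * (c ⬝ᵥ c) := by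
  have h := (smul_one_sub_posSemidef v).dotProduct_mulVec_nonneg c
  simp only [Matrix.sub_mulVec, Matrix.smul_mulVec, Matrix.one_mulVec,
    dotProduct_sub, dotProduct_smul, star_trivial, smul_eq_mul] at h
  linarith

lemma sum_inner_sq_le {m : ℕ} [NeZero m] (v : Fin m → E3) (r : E3) (hr : ‖r‖ ≤ 1) :
    ∑ i, (inner ℝ (v i) r : ℝ) ^ 2 ≤ lamMax v := by
  suffices h : (∑ i, ((fun i => (inner ℝ (v i) r : ℝ)) i) ^ 2) ≤ lamMax v by exact h
  set c : Fin m → ℝ := fun i => (inner ℝ (v i) r : ℝ) with hc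
  set S : ℝ := ∑ i, c i ^ 2 with hS
  have hS0 : 0 ≤ S := Finset.sum_nonneg fun i _ => sq_nonneg _
  set u : E3 := ∑ i, c i • v i with hu
  have hur : (inner ℝ u r : ℝ) = S := by
    rw [hu, sum_inner]
    simp only [real_inner_smul_left, hS, sq, hc]
  have huu : (inner ℝ u u : ℝ) = c ⬝ᵥ (gram v *ᵥ c) := by
    simp only [hu, sum_inner, inner_sum, real_inner_smul_left, real_inner_smul_right,
      dotProduct, Matrix.mulVec, _root_.gram, Matrix.of_apply, Finset.mul_sum]
    refine Finset.sum_congr rfl fun i _ =>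
      Finset.sum_congr rfl fun j _ => (by ring_nf; rw [real_inner_comm])
  have hcs : S ^ 2 ≤ (inner ℝ u u : ℝ) * (inner ℝ r r : ℝ) := by
    rw [← hur, sq]
    exact real_inner_mul_inner_self_le u r
  have hrr : (inner ℝ r r : ℝ) ≤ 1 := by
    rw [real_inner_self_eq_norm_sq]
    nlinarith [norm_nonneg r]
  have hq : (inner ℝ u u : ℝ) ≤ lamMax v * S := by
    rw [huu]
    have := gram_quadform_le v c
    have hcc : c ⬝ᵥ c = S := by simp [dotProduct, hS, sq]
    rwa [hcc] at this
  have hfin : S ^ 2 ≤ lamMax v * S := by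
    nlinarith [real_inner_self_nonneg (x := u)]
  rcases eq_or_lt_of_le hS0 with h | h
  · rw [← h]; exact lamMax_nonneg v
  · nlinarith

lemma qObs_eq (a0 : ℝ) (a : E3) :
    qObs a0 a = !![(a0 : ℂ) + a 2, (a 0 : ℂ) - (a 1 : ℂ) * Complex.I;
      (a 0 : ℂ) + (a 1 : ℂ) * Complex.I, (a0 : ℂ) - a 2] := by
  ext i j
  fin_cases i <;> fin_cases j <;>
    simp [qObs, pauli1, pauli2, pauli3, Matrix.one_apply] <;> ring

lemma qObs_isHermitian (a0 : ℝ) (a : E3) : (qObs a0 a).IsHermitian := by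
  rw [qObs_eq]
  ext i j
  fin_cases i <;> fin_cases j <;>
    simp [Matrix.conjTranspose_apply, Complex.ext_iff]

lemma qObs_sq (a0 : ℝ) (a : E3) :
    qObs a0 a * qObs a0 a
      = qObs (a0 ^ 2 + ((a 0) ^ 2 + (a 1) ^ 2 + (a 2) ^ 2)) ((2 * a0) • a) := by
  rw [qObs_eq, qObs_eq]
  ext i j
  fin_cases i <;> fin_cases j <;>
    · simp [Matrix.mul_apply, Fin.sum_univ_two, PiLp.smul_apply, Complex.ext_iff,
        Complex.mul_re, Complex.mul_im, ← Complex.ofReal_pow]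
      constructor <;> ring

/-- The Bloch vector of a qubit state. -/
def bloch (ρ : Matrix (Fin 2) (Fin 2) ℂ) : E3 :=
  (WithLp.equiv 2 (Fin 3 → ℝ)).symm
    ![2 * (ρ 0 1).re, -2 * (ρ 0 1).im, 2 * (ρ 0 0).re - 1]

lemma trace_mul_fin2 (M ρ : Matrix (Fin 2) (Fin 2) ℂ) :
    Matrix.trace (M * ρ) = M 0 0 * ρ 0 0 + M 0 1 * ρ 1 0 + M 1 0 * ρ 0 1 + M 1 1 * ρ 1 1 := by
  simp [Matrix.trace, Matrix.mul_apply, Fin.sum_univ_two, Matrix.diag]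
  ring

lemma mean_qObs (a0 : ℝ) (a : E3) (ρ : Matrix (Fin 2) (Fin 2) ℂ)
    (hH : ρ.IsHermitian) (htr : ρ.trace = 1) :
    mean (qObs a0 a) ρ = a0 + (inner ℝ a (bloch ρ) : ℝ) := by
  have h00 : (ρ 0 0).im = 0 := Complex.conj_eq_iff_im.mp (hH.apply 0 0)
  have h10 : ρ 1 0 = (starRingEnd ℂ) (ρ 0 1) := (hH.apply 1 0).symm
  have h11 : ρ 1 1 = 1 - ρ 0 0 := by
    have := htr
    simp [Matrix.trace, Fin.sum_univ_two, Matrix.diag] at this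
    linear_combination this
  rw [mean, trace_mul_fin2, qObs_eq, h10, h11]
  simp only [bloch, PiLp.inner_apply, Fin.sum_univ_three, WithLp.equiv_symm_apply, PiLp.toLp_apply]
  simp [Complex.add_re, Complex.sub_re, Complex.mul_re, Complex.mul_im, h00,
    Complex.conj_re, Complex.conj_im, RCLike.inner_apply]
  ring

lemma variance_qObs (a0 : ℝ) (a : E3) (ρ : Matrix (Fin 2) (Fin 2) ℂ)
    (hH : ρ.IsHermitian) (htr : ρ.trace = 1) :
    variance (qObs a0 a) ρ = (inner ℝ a a : ℝ) - (inner ℝ a (bloch ρ) : ℝ) ^ 2 := by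
  have hsq : (Matrix.trace (qObs a0 a * qObs a0 a * ρ)).re
      = (a0 ^ 2 + ((a 0) ^ 2 + (a 1) ^ 2 + (a 2) ^ 2))
        + (inner ℝ ((2 * a0) • a) (bloch ρ) : ℝ) := by
    rw [qObs_sq]
    exact mean_qObs _ _ ρ hH htr
  rw [variance, hsq, mean_qObs a0 a ρ hH htr, real_inner_smul_left]
  have : (inner ℝ a a : ℝ) = (a 0) ^ 2 + (a 1) ^ 2 + (a 2) ^ 2 := by
    rw [PiLp.inner_apply]
    simp [Fin.sum_univ_three, sq]
  rw [this]
  ring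

lemma bloch_norm_le (ρ : Matrix (Fin 2) (Fin 2) ℂ) (hρ : IsDensityMatrix ρ) :
    ‖bloch ρ‖ ≤ 1 := by
  have hH := hρ.1.1
  have h00 : (ρ 0 0).im = 0 := Complex.conj_eq_iff_im.mp (hH.apply 0 0)
  have h10 : ρ 1 0 = (starRingEnd ℂ) (ρ 0 1) := (hH.apply 1 0).symm
  have h11 : ρ 1 1 = 1 - ρ 0 0 := by
    have := hρ.2
    simp [Matrix.trace, Fin.sum_univ_two, Matrix.diag] at this
    linear_combination this
  have hdet : 0 ≤ (ρ.det).re := by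
    rw [hH.det_eq_prod_eigenvalues]
    rw [← RCLike.ofReal_prod]
    show (0:ℝ) ≤ ((((∏ i : Fin 2, hH.eigenvalues i) : ℝ)) : ℂ).re
    rw [Complex.ofReal_re]
    exact Finset.prod_nonneg fun i _ => hρ.1.eigenvalues_nonneg i
  rw [Matrix.det_fin_two, h10, h11] at hdet
  simp only [Complex.sub_re, Complex.mul_re, Complex.one_re, Complex.one_im,
    Complex.sub_im, Complex.conj_re, Complex.conj_im, h00] at hdet
  have hin : (inner ℝ (bloch ρ) (bloch ρ) : ℝ) ≤ 1 := by
    simp only [bloch, PiLp.inner_apply, Fin.sum_univ_three, WithLp.equiv_symm_apply, PiLp.toLp_apply,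
      RCLike.inner_apply, starRingEnd_apply, star_trivial,
      Matrix.cons_val_zero, Matrix.cons_val_one, Matrix.head_cons,
      Matrix.cons_val_two, Matrix.tail_cons]
    nlinarith [hdet]
  have h0 : 0 ≤ ‖bloch ρ‖ := norm_nonneg _
  nlinarith [real_inner_self_eq_norm_sq (bloch ρ) ▸ hin]

lemma qubit_sum (a0 : Fin 3 → ℝ) (a : Fin 3 → E3) (ρ : Matrix (Fin 2) (Fin 2) ℂ)
    (hρ : IsDensityMatrix ρ) :
    (gram a).trace - lamMax a ≤ ∑ i, variance (qObs (a0 i) (a i)) ρ := by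
  have hH := hρ.1.1
  have h : ∀ i : Fin 3, variance (qObs (a0 i) (a i)) ρ
      = (inner ℝ (a i) (a i) : ℝ) - (inner ℝ (a i) (bloch ρ) : ℝ) ^ 2 :=
    fun i => variance_qObs _ _ _ hH hρ.2
  rw [Finset.sum_congr rfl fun i _ => h i, Finset.sum_sub_distrib]
  have htr : (gram a).trace = ∑ i, (inner ℝ (a i) (a i) : ℝ) := by
    simp [Matrix.trace, _root_.gram, Matrix.diag]
  rw [htr]
  have := sum_inner_sq_le a (bloch ρ) (bloch_norm_le ρ hρ)
  linarith

lemma trace_mul_real {n : Type*} [Fintype n] {M ρ : Matrix n n ℂ}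
    (hM : M.IsHermitian) (hρ : ρ.IsHermitian) :
    Matrix.trace (M * ρ) = ((mean M ρ : ℝ) : ℂ) := by
  have h : (starRingEnd ℂ) (Matrix.trace (M * ρ)) = Matrix.trace (M * ρ) := by
    have : (starRingEnd ℂ) (Matrix.trace (M * ρ)) = Matrix.trace ((M * ρ)ᴴ) := by
      rw [Matrix.trace_conjTranspose]
      rfl
    rw [this, Matrix.conjTranspose_mul, hρ.eq, hM.eq, Matrix.trace_mul_comm]
  exact (Complex.conj_eq_iff_re.mp h).symm

lemma variance_obs2_prod (A B ρ1 ρ2 : Matrix (Fin 2) (Fin 2) ℂ)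
    (hA : A.IsHermitian) (hB : B.IsHermitian)
    (h1 : IsDensityMatrix ρ1) (h2 : IsDensityMatrix ρ2) :
    variance (obs2 A B) (ρ1 ⊗ₖ ρ2) = variance A ρ1 + variance B ρ2 := by
  have ht1 : ρ1.trace = 1 := h1.2
  have ht2 : ρ2.trace = 1 := h2.2
  have hmean : Matrix.trace (obs2 A B * (ρ1 ⊗ₖ ρ2))
      = Matrix.trace (A * ρ1) + Matrix.trace (B * ρ2) := by
    rw [obs2, Matrix.add_mul, Matrix.trace_add, ← Matrix.mul_kronecker_mul,
      ← Matrix.mul_kronecker_mul, Matrix.trace_kronecker, Matrix.trace_kronecker]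
    simp [ht1, ht2]
  have hsq : Matrix.trace (obs2 A B * obs2 A B * (ρ1 ⊗ₖ ρ2))
      = Matrix.trace (A * A * ρ1) + Matrix.trace (B * B * ρ2)
        + 2 * (Matrix.trace (A * ρ1) * Matrix.trace (B * ρ2)) := by
    have expand : obs2 A B * obs2 A B
        = (A * A) ⊗ₖ (1 : Matrix (Fin 2) (Fin 2) ℂ)
          + (1 : Matrix (Fin 2) (Fin 2) ℂ) ⊗ₖ (B * B) + (A ⊗ₖ B + A ⊗ₖ B) := by
      rw [obs2, Matrix.add_mul, Matrix.mul_add, Matrix.mul_add,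
        ← Matrix.mul_kronecker_mul, ← Matrix.mul_kronecker_mul,
        ← Matrix.mul_kronecker_mul, ← Matrix.mul_kronecker_mul]
      simp only [one_mul, mul_one]
      abel
    rw [expand]
    simp only [Matrix.add_mul, Matrix.trace_add, ← Matrix.mul_kronecker_mul,
      Matrix.trace_kronecker, one_mul, mul_one, ht1, ht2]
    ring
  have hcrossA := trace_mul_real hA h1.1.1
  have hcrossB := trace_mul_real hB h2.1.1
  rw [variance, variance, variance, hsq]
  simp only [mean]
  rw [hmean, hcrossA, hcrossB]
  simp only [Complex.add_re, Complex.mul_re, Complex.ofReal_re, Complex.ofReal_im,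
    Complex.re_ofNat, Complex.im_ofNat]
  ring

lemma variance_mix {n : Type*} [Fintype n] (M : Matrix n n ℂ) (N : ℕ)
    (p : Fin N → ℝ) (σ : Fin N → Matrix n n ℂ)
    (hp : ∀ k, 0 ≤ p k) (hpsum : ∑ k, p k = 1) :
    ∑ k, p k * variance M (σ k) ≤ variance M (∑ k, (p k : ℂ) • σ k) := by
  have hlin : ∀ (X : Matrix n n ℂ),
      (Matrix.trace (X * ∑ k, (p k : ℂ) • σ k)).re
        = ∑ k, p k * (Matrix.trace (X * σ k)).re := by
    intro X
    rw [Matrix.mul_sum, Matrix.trace_sum]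
    rw [Complex.re_sum]
    refine Finset.sum_congr rfl fun k _ => ?_
    rw [Matrix.mul_smul, Matrix.trace_smul, smul_eq_mul, Complex.re_ofReal_mul]
  have h2 := hlin (M * M)
  have h1 := hlin M
  rw [variance, mean, h2, h1]
  have hjensen : (∑ k, p k * (Matrix.trace (M * σ k)).re) ^ 2
      ≤ ∑ k, p k * ((Matrix.trace (M * σ k)).re) ^ 2 := by
    have := Finset.sum_sq_le_sum_mul_sum_of_sq_eq_mul Finset.univ
      (r := fun k => p k * (Matrix.trace (M * σ k)).re)
      (f := fun k => p k)
      (g := fun k => p k * ((Matrix.trace (M * σ k)).re) ^ 2)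
      (fun k _ => hp k) (fun k _ => mul_nonneg (hp k) (sq_nonneg _))
      (fun k _ => by ring)
    rwa [hpsum, one_mul] at this
  have hsplit : ∑ k, p k * variance M (σ k)
      = ∑ k, (p k * (Matrix.trace (M * M * σ k)).re - p k * (mean M (σ k)) ^ 2) := by
    refine Finset.sum_congr rfl fun k _ => ?_
    rw [variance]; ring
  rw [hsplit, Finset.sum_sub_distrib]
  have hm : ∀ k, mean M (σ k) = (Matrix.trace (M * σ k)).re := fun k => rfl
  simp only [hm]
  linarith

/-- entanglement criterion for separable bipartite states with three
composite measurements. -/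
theorem separable_bipartite_three_measurements
    (a0 b0 : Fin 3 → ℝ) (a b : Fin 3 → E3)
    (hlia : LinearIndependent ℝ ![a 0, a 1, a 2])
    (hlib : LinearIndependent ℝ ![b 0, b 1, b 2])
    (ρ : Matrix (Fin 2 × Fin 2) (Fin 2 × Fin 2) ℂ)
    (N : ℕ) (p : Fin N → ℝ)
    (ρA ρB : Fin N → Matrix (Fin 2) (Fin 2) ℂ)
    (hp : ∀ k, 0 ≤ p k) (hpsum : ∑ k, p k = 1)
    (hA : ∀ k, IsDensityMatrix (ρA k)) (hB : ∀ k, IsDensityMatrix (ρB k))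
    (hsep : ρ = ∑ k, (p k : ℂ) • (ρA k ⊗ₖ ρB k)) :
    ∑ i : Fin 3, variance (obs2 (qObs (a0 i) (a i)) (qObs (b0 i) (b i))) ρ
      ≥ ((gram a).trace - lamMax a) + ((gram b).trace - lamMax b) := by
  rw [ge_iff_le]
  have step1 : ∀ i : Fin 3,
      ∑ k, p k * variance (obs2 (qObs (a0 i) (a i)) (qObs (b0 i) (b i))) (ρA k ⊗ₖ ρB k)
        ≤ variance (obs2 (qObs (a0 i) (a i)) (qObs (b0 i) (b i))) ρ := by
    intro i
    rw [hsep]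
    exact variance_mix _ N p _ hp hpsum
  have step2 : ∀ k, ((gram a).trace - lamMax a) + ((gram b).trace - lamMax b)
      ≤ ∑ i : Fin 3,
          variance (obs2 (qObs (a0 i) (a i)) (qObs (b0 i) (b i))) (ρA k ⊗ₖ ρB k) := by
    intro k
    have heq : ∀ i : Fin 3,
        variance (obs2 (qObs (a0 i) (a i)) (qObs (b0 i) (b i))) (ρA k ⊗ₖ ρB k)
          = variance (qObs (a0 i) (a i)) (ρA k) + variance (qObs (b0 i) (b i)) (ρB k) :=
      fun i => variance_obs2_prod _ _ _ _ (qObs_isHermitian _ _) (qObs_isHermitian _ _)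
        (hA k) (hB k)
    rw [Finset.sum_congr rfl fun i _ => heq i, Finset.sum_add_distrib]
    exact add_le_add (qubit_sum a0 a (ρA k) (hA k)) (qubit_sum b0 b (ρB k) (hB k))
  calc ((gram a).trace - lamMax a) + ((gram b).trace - lamMax b)
      = ∑ k, p k * (((gram a).trace - lamMax a) + ((gram b).trace - lamMax b)) := by
        rw [← Finset.sum_mul, hpsum, one_mul]
    _ ≤ ∑ k, p k * ∑ i : Fin 3,
          variance (obs2 (qObs (a0 i) (a i)) (qObs (b0 i) (b i))) (ρA k ⊗ₖ ρB k) :=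
        Finset.sum_le_sum fun k _ => mul_le_mul_of_nonneg_left (step2 k) (hp k)
    _ = ∑ i : Fin 3, ∑ k, p k *
          variance (obs2 (qObs (a0 i) (a i)) (qObs (b0 i) (b i))) (ρA k ⊗ₖ ρB k) := by
        simp only [Finset.mul_sum]
        exact Finset.sum_comm
    _ ≤ ∑ i : Fin 3, variance (obs2 (qObs (a0 i) (a i)) (qObs (b0 i) (b i))) ρ :=
        Finset.sum_le_sum fun i _ => step1 i


end
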